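/- For every m ≥ 1 and pairwise distinct nonzero real numbers x_1,…,x_m: ∑_{β=1}^m (sgn(x_β) − 1) ∏_{α ≠ β} sgn(x_α − x_β) = ∏_{α=1}^m sgn(x_α) − 1. -/
import Mathlib

lemma sign_sum_identity_aux (s : Finset ℝ) (h0 : (0:ℝ) ∉ s) :
    ∑ b ∈ s, (Real.sign b - 1) * ∏ a ∈ s.erase b, Real.sign (a - b)
      = (∏ a ∈ s, Real.sign a) - 1 := by
  induction s using Finset.strongInduction with
  | _ s ih =>
    rcases s.eq_empty_or_nonempty with rfl | hne
    · simp
    · set μ := s.min' hne with hμdef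
      have hμ : μ ∈ s := s.min'_mem hne
      set t := s.erase μ with ht
      have hts : t ⊂ s := Finset.erase_ssubset hμ
      have h0t : (0:ℝ) ∉ t := fun h => h0 (Finset.mem_of_mem_erase h)
      have IH := ih t hts h0t
      have hlt : ∀ a ∈ t, μ < a := by
        intro a ha
        have h1 : a ∈ s := Finset.mem_of_mem_erase ha
        have h2 : a ≠ μ := Finset.ne_of_mem_erase ha
        exact lt_of_le_of_ne (s.min'_le a h1) (Ne.symm h2)
      rw [← Finset.add_sum_erase _ _ hμ, ← Finset.mul_prod_erase _ _ hμ, ← ht]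
      have hprodμ : ∏ a ∈ s.erase μ, Real.sign (a - μ) = 1 := by
        rw [← ht]
        apply Finset.prod_eq_one
        intro a ha
        exact Real.sign_of_pos (sub_pos.mpr (hlt a ha))
      rw [hprodμ, mul_one]
      have hsum : ∑ b ∈ t, (Real.sign b - 1) * ∏ a ∈ s.erase b, Real.sign (a - b)
          = -((∏ a ∈ t, Real.sign a) - 1) := by
        rw [← IH, ← Finset.sum_neg_distrib]
        apply Finset.sum_congr rfl
        intro b hb
        have hbμ : b ≠ μ := Finset.ne_of_mem_erase hb
        have hμb : μ ∈ s.erase b := Finset.mem_erase.mpr ⟨Ne.symm hbμ, hμ⟩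
        have : (s.erase b).erase μ = t.erase b := by
          rw [ht, Finset.erase_right_comm]
        rw [← Finset.mul_prod_erase _ _ hμb, this,
          Real.sign_of_neg (sub_neg.mpr (hlt b hb))]
        ring
      rw [hsum]
      have hμ0 : μ ≠ 0 := fun h => h0 (h ▸ hμ)
      rcases lt_or_gt_of_ne hμ0 with hneg | hpos
      · rw [Real.sign_of_neg hneg]; ring
      · have : ∏ a ∈ t, Real.sign a = 1 := by
          apply Finset.prod_eq_one
          intro a ha
          exact Real.sign_of_pos (lt_trans hpos (hlt a ha))
        rw [this, Real.sign_of_pos hpos]; ring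

/-- for `m ≥ 1` and pairwise distinct nonzero reals `x₁,…,x_m`,
`∑_{β} (sgn(x_β) − 1) ∏_{α ≠ β} sgn(x_α − x_β) = ∏_α sgn(x_α) − 1`. -/
theorem sign_sum_identity (m : ℕ) (hm : 1 ≤ m) (x : Fin m → ℝ)
    (hx : ∀ α, x α ≠ 0) (hdist : ∀ α β, α ≠ β → x α ≠ x β) :
    ∑ β : Fin m, (Real.sign (x β) - 1) *
        ∏ α ∈ Finset.univ.erase β, Real.sign (x α - x β) =
      (∏ α : Fin m, Real.sign (x α)) - 1 := by
  have hinj : Function.Injective x := by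
    intro a b h
    by_contra hne
    exact hdist a b hne h
  set s := Finset.image x Finset.univ with hs
  have h0 : (0:ℝ) ∉ s := by
    simp only [hs, Finset.mem_image]
    rintro ⟨α, -, hα⟩
    exact hx α hα
  have key := sign_sum_identity_aux s h0
  rw [hs, Finset.sum_image (fun a _ b _ h => hinj h),
    Finset.prod_image (fun a _ b _ h => hinj h)] at key
  rw [← key]
  apply Finset.sum_congr rfl
  intro β _
  congr 1
  rw [← Finset.image_erase hinj, Finset.prod_image (fun a _ b _ h => hinj h)]
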